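/- Let k be a field and let D be a k-linear, Hom-finite, Ext-bounded triangulated category satisfying the comparability property. Let d ≥ 2 be an integer, T an endofunctor of D (triangulated and not virtually zero), and suppose there exist a split generator G of D, an object A, and for each n ≥ 1 a distinguished triangle A[(1−d)(n−1)] → T^{n−1}(G) → Tⁿ(G) → A[(1−d)(n−1)+1]. Then: (iii) if t < 0, h_t(T) = (1−d)t, and there is a nonzero object E with T(E) ≅ E[1−d], then h^pol_t(T) = 0; (iv) if t > 0, h_t(T) = 0, and there is a nonzero object E′ with T(E′) ≅ E′, then h^pol_t(T) = 0. -/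

import Mathlib

open CategoryTheory Category Limits Pretriangulated Filter Topology
open scoped ENNReal

universe v u

namespace CatDyn

variable {D : Type u} [Category.{v} D] [Limits.HasZeroObject D] [Preadditive D]
  [HasShift D ℤ] [∀ n : ℤ, (CategoryTheory.shiftFunctor D n).Additive] [Pretriangulated D]
  [HasBinaryBiproducts D]

/-- A tower `0 = A₀ → A₁ → ⋯ → A_m ≅ N ⊕ N'` with cones shifts of `M`,
computing the complexity of `N` with respect to `M`. -/
structure Tower (M N : D) where
  m : ℕ
  A : Fin (m + 1) → D
  f : ∀ i : Fin m, A i.castSucc ⟶ A i.succ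
  shifts : Fin m → ℤ
  N' : D
  isZero_zero : IsZero (A 0)
  lastIso : A (Fin.last m) ≅ N ⊞ N'
  dist : ∀ i : Fin m, ∃ (g : A i.succ ⟶ M⟦shifts i⟧) (h : M⟦shifts i⟧ ⟶ (A i.castSucc)⟦(1 : ℤ)⟧),
    Triangle.mk (f i) g h ∈ distTriang D

/-- The value `Σ_k e^{n_k t}` of a tower. -/
noncomputable def Tower.value {M N : D} (t : ℝ) (T : Tower M N) : ℝ≥0∞ :=
  ∑ i : Fin T.m, ENNReal.ofReal (Real.exp (T.shifts i * t))

/-- The complexity function `δ_t(M,N)`, valued in `[0,∞]`; it is `∞` iff no tower exists,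
i.e. iff `N` is not in the thick triangulated subcategory generated by `M`. -/
noncomputable def complexity (t : ℝ) (M N : D) : ℝ≥0∞ :=
  ⨅ T : Tower M N, T.value t

/-- `G` is a split generator: every object admits a tower over `G`, i.e. the thick
triangulated subcategory generated by `G` is all of `D`. -/
def IsSplitGenerator (G : D) : Prop := ∀ N : D, Nonempty (Tower G N)

/-- The `n`-th iterate of an endofunctor. -/
def fpow (F : D ⥤ D) : ℕ → D ⥤ D
  | 0 => 𝟭 D
  | n + 1 => fpow F n ⋙ F

/-- `F` is not virtually zero: no positive iterate is the zero functor. -/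
def NotVirtuallyZero (F : D ⥤ D) : Prop := ∀ n : ℕ, 0 < n → ¬ IsZero (fpow F n)

/-- The categorical entropy `h_t(F) ∈ [-∞,∞)`, computed with split generator `G`
(the limit exists and is independent of the generator). -/
noncomputable def entropy (t : ℝ) (F : D ⥤ D) (G : D) : EReal :=
  limsup (fun n : ℕ =>
    ENNReal.log (complexity t G ((fpow F n).obj G)) * (((n : ℝ)⁻¹ : ℝ) : EReal)) atTop

/-- The categorical polynomial entropy
`h^pol_t(F) = limsup (log δ_t(G, Fⁿ G) - n h_t(F)) / log n`. -/
noncomputable def polyEntropy (t : ℝ) (F : D ⥤ D) (G : D) : EReal :=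
  limsup (fun n : ℕ =>
    (ENNReal.log (complexity t G ((fpow F n).obj G)) - ((n : ℝ) : EReal) * entropy t F G)
      * ((((Real.log n)⁻¹ : ℝ)) : EReal)) atTop

/-- The lower categorical polynomial entropy (with `liminf` instead of `limsup`). -/
noncomputable def polyEntropyLow (t : ℝ) (F : D ⥤ D) (G : D) : EReal :=
  liminf (fun n : ℕ =>
    (ENNReal.log (complexity t G ((fpow F n).obj G)) - ((n : ℝ) : EReal) * entropy t F G)
      * ((((Real.log n)⁻¹ : ℝ)) : EReal)) atTop

section Linear

variable (𝕜 : Type*) [Field 𝕜] [Linear 𝕜 D]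

/-- The Ext-distance `ε_t(M,N) = Σ_{k∈ℤ} dim Hom(M, N[k]) e^{-kt}`. -/
noncomputable def extDist (t : ℝ) (M N : D) : ℝ≥0∞ :=
  ∑' k : ℤ, (Module.finrank 𝕜 (M ⟶ N⟦k⟧) : ℝ≥0∞) * ENNReal.ofReal (Real.exp (-k * t))

variable (D) in
/-- `D` is Hom-finite over `𝕜`. -/
def HomFinite : Prop := ∀ X Y : D, FiniteDimensional 𝕜 (X ⟶ Y)

variable (D) in
/-- `D` is Ext-bounded: `Hom(X, Y[k]) = 0` for all but finitely many `k`. -/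
def ExtBounded : Prop := ∀ X Y : D, {k : ℤ | ∃ f : X ⟶ Y⟦k⟧, f ≠ 0}.Finite

variable (D) in
/-- The comparability property: `δ_t` and `ε_t` control each other, uniformly in the objects. -/
def Comparability : Prop :=
  ∃ C₁ C₂ : ℝ → ℝ, (∀ t, 0 < C₁ t ∧ 0 < C₂ t) ∧
    ∀ (t : ℝ) (M N : D),
      ENNReal.ofReal (C₁ t) * extDist 𝕜 t M N ≤ complexity t M N ∧
      complexity t M N ≤ ENNReal.ofReal (C₂ t) * extDist 𝕜 t M N

end Linear



section Aux
set_option linter.unusedSectionVars false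
set_option maxHeartbeats 1000000

variable (𝕜 : Type*) [Field 𝕜] [Linear 𝕜 D]


variable {D : Type u} [Category.{v} D] [Limits.HasZeroObject D] [Preadditive D]
  [HasShift D ℤ] [∀ n : ℤ, (CategoryTheory.shiftFunctor D n).Additive] [Pretriangulated D]
  [HasBinaryBiproducts D]

variable (𝕜 : Type*) [Field 𝕜] [Linear 𝕜 D]


lemma finrank_congr {M N N₂ : D} (e : N ≅ N₂) :
    Module.finrank 𝕜 (M ⟶ N) = Module.finrank 𝕜 (M ⟶ N₂) :=
  (Linear.homCongr 𝕜 (Iso.refl M) e).finrank_eq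

lemma extDist_congr (t : ℝ) {M N N₂ : D} (e : N ≅ N₂) :
    extDist 𝕜 t M N = extDist 𝕜 t M N₂ := by
  unfold extDist
  congr 1
  ext k
  rw [finrank_congr 𝕜 ((shiftFunctor D k).mapIso e)]

lemma extDist_zero (t : ℝ) (M : D) {N : D} (hN : IsZero N) : extDist 𝕜 t M N = 0 := by
  unfold extDist
  rw [ENNReal.tsum_eq_zero]
  intro k
  have hz : IsZero (N⟦k⟧) := (shiftFunctor D k).map_isZero hN
  have : Subsingleton (M ⟶ N⟦k⟧) := ⟨fun f g => hz.eq_of_tgt f g⟩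
  rw [Module.finrank_zero_of_subsingleton]
  simp

lemma extDist_shift (t : ℝ) (M N : D) (m : ℤ) :
    extDist 𝕜 t M (N⟦m⟧) = ENNReal.ofReal (Real.exp (m * t)) * extDist 𝕜 t M N := by
  unfold extDist
  rw [← ENNReal.tsum_mul_left]
  rw [← (Equiv.subRight m).tsum_eq
    (fun k => (Module.finrank 𝕜 (M ⟶ (N⟦m⟧)⟦k⟧) : ℝ≥0∞) * ENNReal.ofReal (Real.exp (-k * t)))]
  congr 1
  ext j
  have e : N⟦j⟧ ≅ (N⟦m⟧)⟦(Equiv.subRight m) j⟧ :=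
    (shiftFunctorAdd' D m (j - m) j (by ring)).app N
  rw [← finrank_congr 𝕜 e]
  rw [mul_comm (ENNReal.ofReal (Real.exp (↑m * t)))]
  rw [mul_assoc, ← ENNReal.ofReal_mul (Real.exp_pos _).le, ← Real.exp_add]
  congr 2
  push_cast [Equiv.subRight_apply]
  ring_nf




lemma finrank_le_of_splitMono (hfin : HomFinite D 𝕜) {M X Y : D} (i : X ⟶ Y) (r : Y ⟶ X)
    (hir : i ≫ r = 𝟙 X) : Module.finrank 𝕜 (M ⟶ X) ≤ Module.finrank 𝕜 (M ⟶ Y) := by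
  have := hfin M Y
  refine LinearMap.finrank_le_finrank_of_injective (f := Linear.rightComp 𝕜 M i) ?_
  intro f g hfg
  have := congrArg (fun u => u ≫ r) hfg
  simpa [hir] using this

lemma extDist_le_biprod (hfin : HomFinite D 𝕜) (t : ℝ) (M N N' : D) :
    extDist 𝕜 t M N ≤ extDist 𝕜 t M (N ⊞ N') := by
  refine ENNReal.tsum_le_tsum (fun k => ?_)
  refine mul_le_mul_left (Nat.cast_le.2 ?_) _
  refine finrank_le_of_splitMono 𝕜 hfin ((shiftFunctor D k).map biprod.inl)
    ((shiftFunctor D k).map biprod.fst) ?_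
  rw [← Functor.map_comp]
  simp

lemma finrank_middle_le (hfin : HomFinite D 𝕜) (M : D) (S : Triangle D)
    (hS : S ∈ distTriang D) :
    Module.finrank 𝕜 (M ⟶ S.obj₂) ≤
      Module.finrank 𝕜 (M ⟶ S.obj₁) + Module.finrank 𝕜 (M ⟶ S.obj₃) := by
  have h1 := hfin M S.obj₁
  have h2 := hfin M S.obj₂
  have h3 := hfin M S.obj₃
  set u : (M ⟶ S.obj₁) →ₗ[𝕜] (M ⟶ S.obj₂) := Linear.rightComp 𝕜 M S.mor₁ with hu
  set v : (M ⟶ S.obj₂) →ₗ[𝕜] (M ⟶ S.obj₃) := Linear.rightComp 𝕜 M S.mor₂ with hv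
  have hker : LinearMap.ker v = LinearMap.range u := by
    ext f
    constructor
    · intro hf
      obtain ⟨g, hg⟩ := Triangle.coyoneda_exact₂ S hS f (by simpa [hv] using hf)
      exact ⟨g, hg.symm⟩
    · rintro ⟨g, rfl⟩
      simp only [LinearMap.mem_ker, hu, hv, Linear.rightComp_apply, Category.assoc]
      rw [comp_distTriang_mor_zero₁₂ S hS]
      simp
  have := LinearMap.finrank_range_add_finrank_ker v
  have hrle : Module.finrank 𝕜 (LinearMap.range v) ≤ Module.finrank 𝕜 (M ⟶ S.obj₃) :=
    Submodule.finrank_le _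
  have hkle : Module.finrank 𝕜 (LinearMap.ker v) ≤ Module.finrank 𝕜 (M ⟶ S.obj₁) := by
    rw [hker]; exact LinearMap.finrank_range_le u
  omega

lemma extDist_middle_le (hfin : HomFinite D 𝕜) (t : ℝ) (M : D) (S : Triangle D)
    (hS : S ∈ distTriang D) :
    extDist 𝕜 t M S.obj₂ ≤ extDist 𝕜 t M S.obj₁ + extDist 𝕜 t M S.obj₃ := by
  unfold extDist
  rw [← ENNReal.tsum_add]
  refine ENNReal.tsum_le_tsum (fun k => ?_)
  rw [← add_mul]
  gcongr
  have hk := Triangle.shift_distinguished S hS k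
  have := finrank_middle_le 𝕜 hfin M _ hk
  rw [← Nat.cast_add]
  exact_mod_cast this


lemma extDist_lt_top (hfin : HomFinite D 𝕜) (hbdd : ExtBounded D) (t : ℝ) (M N : D) :
    extDist 𝕜 t M N < ⊤ := by
  have hfinset := hbdd M N
  unfold extDist
  rw [tsum_eq_sum (s := hfinset.toFinset) ?h]
  · refine ENNReal.sum_lt_top.2 (fun k _ => ?_)
    exact ENNReal.mul_lt_top (by simp) ENNReal.ofReal_lt_top
  · intro k hk
    have : ∀ f : M ⟶ N⟦k⟧, f = 0 := by
      intro f
      by_contra hf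
      exact hk (by simpa using (⟨f, hf⟩ : ∃ f : M ⟶ N⟦k⟧, f ≠ 0))
    have : Subsingleton (M ⟶ N⟦k⟧) := ⟨fun f g => by rw [this f, this g]⟩
    rw [Module.finrank_zero_of_subsingleton]
    simp



/-- If every hom `G ⟶ E⟦k⟧` vanishes and `E` admits a tower over `G`, then `E ≅ 0`. -/
lemma isZero_of_hom_zero {G E : D} (S : Tower G E)
    (hzero : ∀ (k : ℤ) (f : G ⟶ E⟦k⟧), f = 0) : IsZero E := by
  have key : ∀ i : ℕ, ∀ hi : i < S.m + 1, ∀ (j : ℤ) (φ : S.A ⟨i, hi⟩ ⟶ E⟦j⟧), φ = 0 := by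
    intro i
    induction i with
    | zero =>
      intro hi j φ
      exact S.isZero_zero.eq_of_src φ 0
    | succ i IH =>
      intro hi j φ
      have hi' : i < S.m := by omega
      obtain ⟨g, h, hdist⟩ := S.dist ⟨i, hi'⟩
      have hres : S.f ⟨i, hi'⟩ ≫ φ = 0 := IH (by omega) j _
      obtain ⟨g', hg'⟩ := Triangle.yoneda_exact₂ _ hdist φ hres
      have hg'0 : g' = 0 := by
        set n := S.shifts ⟨i, hi'⟩ with hn
        have hfaith : Function.Injective ((shiftFunctor D (-n)).map :
            (G⟦n⟧ ⟶ E⟦j⟧) → _) := fun a b hab => (shiftFunctor D (-n)).map_injective hab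
        apply hfaith
        have hψ : (shiftFunctorCompIsoId D n (-n) (by ring)).inv.app G ≫
            (shiftFunctor D (-n)).map g' ≫ (shiftFunctorAdd D j (-n)).inv.app E = 0 :=
          hzero (j + -n) _
        rw [← cancel_epi ((shiftFunctorCompIsoId D n (-n) (by ring)).inv.app G),
          ← cancel_mono ((shiftFunctorAdd D j (-n)).inv.app E)]
        refine (Category.assoc _ _ _).trans (hψ.trans ?_)
        change 0 = (_ ≫ (shiftFunctor D (-n)).map (0 : G⟦n⟧ ⟶ E⟦j⟧)) ≫ _
        rw [Functor.map_zero, comp_zero, zero_comp]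
      rw [hg', hg'0, comp_zero]; rfl
  have hlast : S.lastIso.inv ≫ (S.lastIso.hom ≫ biprod.fst ≫ (shiftFunctorZero D ℤ).inv.app E)
      = 0 := by
    rw [key S.m (by omega) 0 (S.lastIso.hom ≫ biprod.fst ≫ (shiftFunctorZero D ℤ).inv.app E),
      comp_zero]
  rw [Iso.inv_hom_id_assoc] at hlast
  have hfst : (biprod.fst : E ⊞ S.N' ⟶ E) = 0 := by
    have := congrArg (fun u => u ≫ (shiftFunctorZero D ℤ).hom.app E) hlast
    simpa using this
  rw [IsZero.iff_id_eq_zero]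
  calc 𝟙 E = biprod.inl ≫ (biprod.fst : E ⊞ S.N' ⟶ E) := by simp
  _ = 0 := by rw [hfst, comp_zero]

lemma extDist_pos (hfin : HomFinite D 𝕜) {G E : D} (S : Tower G E) (hE : ¬ IsZero E) (t : ℝ) :
    0 < extDist 𝕜 t G E := by
  have : ∃ (k : ℤ) (f : G ⟶ E⟦k⟧), f ≠ 0 := by
    by_contra hc
    push_neg at hc
    exact hE (isZero_of_hom_zero S hc)
  obtain ⟨k, f, hf⟩ := this
  have := hfin G (E⟦k⟧)
  have hnt : Nontrivial (G ⟶ E⟦k⟧) := ⟨f, 0, hf⟩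
  have hpos : 0 < Module.finrank 𝕜 (G ⟶ E⟦k⟧) := Module.finrank_pos
  have hterm : (0 : ℝ≥0∞) <
      (Module.finrank 𝕜 (G ⟶ E⟦k⟧) : ℝ≥0∞) * ENNReal.ofReal (Real.exp (-k * t)) :=
    ENNReal.mul_pos (by exact_mod_cast hpos.ne') (ENNReal.ofReal_pos.2 (Real.exp_pos _)).ne'
  exact lt_of_lt_of_le hterm (ENNReal.le_tsum k)


/-- `ε(M,P) ≤ value(S) · ε(M,N)` for a tower `S` of `P` over `N`. -/
lemma extDist_le_tower_value (hfin : HomFinite D 𝕜) (t : ℝ) (M : D) {N P : D} (S : Tower N P) :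
    extDist 𝕜 t M P ≤ S.value t * extDist 𝕜 t M N := by
  have key : ∀ i : ℕ, ∀ hi : i < S.m + 1,
      extDist 𝕜 t M (S.A ⟨i, hi⟩) ≤
        (∑ j ∈ Finset.range i, if hj : j < S.m then
          ENNReal.ofReal (Real.exp (S.shifts ⟨j, hj⟩ * t)) else 0) * extDist 𝕜 t M N := by
    intro i
    induction i with
    | zero =>
      intro hi
      have h0 : (⟨0, hi⟩ : Fin (S.m + 1)) = 0 := rfl
      rw [h0, extDist_zero 𝕜 t M S.isZero_zero]
      exact zero_le
    | succ i IH =>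
      intro hi
      have hi' : i < S.m := by omega
      obtain ⟨g, h, hdist⟩ := S.dist ⟨i, hi'⟩
      have step := extDist_middle_le 𝕜 hfin t M _ hdist
      simp only [Triangle.mk_obj₁, Triangle.mk_obj₂, Triangle.mk_obj₃] at step
      have hA2 : extDist 𝕜 t M (S.A (Fin.succ ⟨i, hi'⟩)) = extDist 𝕜 t M (S.A ⟨i + 1, hi⟩) := rfl
      have hA1 : extDist 𝕜 t M (S.A (Fin.castSucc ⟨i, hi'⟩)) =
          extDist 𝕜 t M (S.A ⟨i, by omega⟩) := rfl
      rw [hA2, hA1, extDist_shift] at step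
      refine le_trans step ?_
      rw [Finset.sum_range_succ, add_mul]
      gcongr
      · exact IH _
      · rw [dif_pos hi']
  have hlast := key S.m (by omega) 
  have hle : extDist 𝕜 t M P ≤ extDist 𝕜 t M (S.A (Fin.last S.m)) := by
    rw [extDist_congr 𝕜 t S.lastIso]
    exact extDist_le_biprod 𝕜 hfin t M P S.N'
  refine le_trans hle (le_trans (le_of_eq (by rfl)) (le_trans (hlast) (le_of_eq ?_)))
  congr 1
  unfold Tower.value
  rw [Finset.sum_range fun j => _]
  refine Finset.sum_congr rfl (fun j _ => ?_)
  rw [dif_pos j.isLt]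



/-- Image of a tower under a triangulated endofunctor. -/
noncomputable def Tower.map {M N : D} (S : Tower M N) (F : D ⥤ D) [F.CommShift ℤ]
    [F.IsTriangulated] : Tower (F.obj M) (F.obj N) where
  m := S.m
  A := fun i => F.obj (S.A i)
  f := fun i => F.map (S.f i)
  shifts := S.shifts
  N' := F.obj S.N'
  isZero_zero := F.map_isZero S.isZero_zero
  lastIso :=
    have : PreservesBinaryBiproduct N S.N' F :=
      Limits.preservesBinaryBiproduct_of_preservesBinaryProduct F
    F.mapIso S.lastIso ≪≫ F.mapBiprod N S.N'
  dist := by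
    intro i
    obtain ⟨g, h, hdist⟩ := S.dist i
    refine ⟨F.map g ≫ (F.commShiftIso (S.shifts i)).hom.app M,
      (F.commShiftIso (S.shifts i)).inv.app M ≫ F.map h ≫
        (F.commShiftIso (1 : ℤ)).hom.app (S.A i.castSucc), ?_⟩
    refine isomorphic_distinguished _ (F.map_distinguished _ hdist) _ ?_
    refine Triangle.isoMk _ _ (Iso.refl _) (Iso.refl _)
      ((F.commShiftIso (S.shifts i)).symm.app M) ?_ ?_ ?_
    · exact (comp_id _).trans (id_comp _).symm
    · change (F.map g ≫ (F.commShiftIso (S.shifts i)).hom.app M) ≫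
        (F.commShiftIso (S.shifts i)).inv.app M = 𝟙 (F.obj (S.A i.succ)) ≫ F.map g
      simp
    · change ((F.commShiftIso (S.shifts i)).inv.app M ≫ F.map h ≫
        (F.commShiftIso (1 : ℤ)).hom.app (S.A i.castSucc)) ≫
        (shiftFunctor D 1).map (𝟙 (F.obj (S.A i.castSucc))) =
        (F.commShiftIso (S.shifts i)).inv.app M ≫ F.map h ≫
          (F.commShiftIso (1 : ℤ)).hom.app (S.A i.castSucc)
      simp

lemma Tower.map_value {M N : D} (S : Tower M N) (F : D ⥤ D) [F.CommShift ℤ]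
    [F.IsTriangulated] (t : ℝ) : (S.map F).value t = S.value t := rfl

/-- `Fⁿ E ≅ E⟦s·n⟧` when `F E ≅ E⟦s⟧`. -/
lemma fpow_obj_iso (F : D ⥤ D) [F.CommShift ℤ] [F.IsTriangulated] {E : D} {s : ℤ}
    (e : F.obj E ≅ E⟦s⟧) (n : ℕ) : Nonempty ((fpow F n).obj E ≅ E⟦s * (n : ℤ)⟧) := by
  induction n with
  | zero =>
    exact ⟨(shiftFunctorZero' D (s * ((0 : ℕ) : ℤ)) (by simp)).symm.app E⟩
  | succ n IH =>
    obtain ⟨e'⟩ := IH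
    refine ⟨?_⟩
    calc (fpow F (n + 1)).obj E = F.obj ((fpow F n).obj E) := rfl
    _ ≅ F.obj (E⟦s * (n : ℤ)⟧) := F.mapIso e'
    _ ≅ (F.obj E)⟦s * (n : ℤ)⟧ := (F.commShiftIso (s * (n : ℤ))).app E
    _ ≅ (E⟦s⟧)⟦s * (n : ℤ)⟧ := (shiftFunctor D (s * (n : ℤ))).mapIso e
    _ ≅ E⟦s * ((n : ℕ) + 1 : ℤ)⟧ := ((shiftFunctorAdd' D s (s * (n : ℤ))
        (s * ((n : ℕ) + 1 : ℤ)) (by ring)).app E).symm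
    _ = E⟦s * (((n + 1 : ℕ) : ℤ))⟧ := by push_cast; rfl


lemma enn_log_bounds {x c : ℝ≥0∞} (hc0 : c ≠ 0) (hctop : c ≠ ⊤) (r : ℝ)
    (hx : c * ENNReal.ofReal (Real.exp r) ≤ x) :
    ((Real.log c.toReal + r : ℝ) : EReal) ≤ ENNReal.log x := by
  calc ((Real.log c.toReal + r : ℝ) : EReal)
      = ENNReal.log c + ENNReal.log (ENNReal.ofReal (Real.exp r)) := by
        rw [ENNReal.log_pos_real hc0 hctop,
          ENNReal.log_ofReal_of_pos (Real.exp_pos r), Real.log_exp, EReal.coe_add]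
  _ = ENNReal.log (c * ENNReal.ofReal (Real.exp r)) := (ENNReal.log_mul_add).symm
  _ ≤ ENNReal.log x := ENNReal.log_monotone hx

lemma limsup_aux (f : ℕ → ℝ≥0∞) (h : ℝ) (K' K : ℝ≥0∞) (hK'0 : K' ≠ 0) (hK'top : K' ≠ ⊤)
    (hKtop : K ≠ ⊤)
    (hlow : ∀ n : ℕ, K' * ENNReal.ofReal (Real.exp ((n : ℝ) * h)) ≤ f n)
    (hup : ∀ n : ℕ, f n ≤ K * ENNReal.ofReal (Real.exp ((n : ℝ) * h))) :
    limsup (fun n : ℕ =>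
      (ENNReal.log (f n) - ((n : ℝ) : EReal) * ((h : ℝ) : EReal)) *
        ((((Real.log n)⁻¹ : ℝ)) : EReal)) atTop = 0 := by
  have hK0 : K ≠ 0 := by
    intro h0
    have h1 := (hlow 0).trans (hup 0)
    rw [h0, zero_mul, le_zero_iff, mul_eq_zero] at h1
    rcases h1 with h1 | h1
    · exact hK'0 h1
    · exact (ENNReal.ofReal_pos.2 (Real.exp_pos _)).ne' h1
  set a : ℝ := Real.log K'.toReal
  set b : ℝ := Real.log K.toReal
  have hf0 : ∀ n : ℕ, f n ≠ 0 := fun n =>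
    (lt_of_lt_of_le (ENNReal.mul_pos hK'0
      (ENNReal.ofReal_pos.2 (Real.exp_pos _)).ne') (hlow n)).ne'
  have hftop : ∀ n : ℕ, f n ≠ ⊤ := fun n =>
    (lt_of_le_of_lt (hup n) (ENNReal.mul_lt_top hKtop.lt_top ENNReal.ofReal_lt_top)).ne
  set ℓ : ℕ → ℝ := fun n => Real.log (f n).toReal with hℓ
  have hlogf : ∀ n : ℕ, ENNReal.log (f n) = ((ℓ n : ℝ) : EReal) := fun n =>
    ENNReal.log_pos_real (hf0 n) (hftop n)
  have hlb : ∀ n : ℕ, a + n * h ≤ ℓ n := by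
    intro n
    have := enn_log_bounds hK'0 hK'top (n * h) (hlow n)
    rw [hlogf n] at this
    exact_mod_cast this
  have hub : ∀ n : ℕ, ℓ n ≤ b + n * h := by
    intro n
    have h2 : ENNReal.log (f n) ≤ ((b + n * h : ℝ) : EReal) := by
      calc ENNReal.log (f n) ≤ ENNReal.log (K * ENNReal.ofReal (Real.exp (n * h))) :=
            ENNReal.log_monotone (hup n)
      _ = ((b + n * h : ℝ) : EReal) := by
          rw [ENNReal.log_mul_add, ENNReal.log_pos_real hK0 hKtop,
            ENNReal.log_ofReal_of_pos (Real.exp_pos _), Real.log_exp, EReal.coe_add]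
    rw [hlogf n] at h2
    exact_mod_cast h2
  set r : ℕ → ℝ := fun n => (ℓ n - n * h) * (Real.log n)⁻¹ with hr
  have heq : (fun n : ℕ =>
      (ENNReal.log (f n) - ((n : ℝ) : EReal) * ((h : ℝ) : EReal)) *
        ((((Real.log n)⁻¹ : ℝ)) : EReal)) = fun n : ℕ => ((r n : ℝ) : EReal) := by
    funext n
    rw [hlogf n, ← EReal.coe_mul, ← EReal.coe_sub, ← EReal.coe_mul]
  rw [heq]
  have hinv : Tendsto (fun n : ℕ => (Real.log n)⁻¹) atTop (𝓝 0) :=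
    (Real.tendsto_log_atTop.comp tendsto_natCast_atTop_atTop).inv_tendsto_atTop
  have hrt : Tendsto r atTop (𝓝 0) := by
    have hA : Tendsto (fun n : ℕ => a * (Real.log n)⁻¹) atTop (𝓝 0) := by
      simpa using hinv.const_mul a
    have hB : Tendsto (fun n : ℕ => b * (Real.log n)⁻¹) atTop (𝓝 0) := by
      simpa using hinv.const_mul b
    refine tendsto_of_tendsto_of_tendsto_of_le_of_le' hA hB ?_ ?_
    · filter_upwards [eventually_ge_atTop 2] with n hn
      have hlogpos : 0 < Real.log n := Real.log_pos (by exact_mod_cast hn)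
      have : a ≤ ℓ n - n * h := by linarith [hlb n]
      exact mul_le_mul_of_nonneg_right this (inv_nonneg.2 hlogpos.le)
    · filter_upwards [eventually_ge_atTop 2] with n hn
      have hlogpos : 0 < Real.log n := Real.log_pos (by exact_mod_cast hn)
      have : ℓ n - n * h ≤ b := by linarith [hub n]
      exact mul_le_mul_of_nonneg_right this (inv_nonneg.2 hlogpos.le)
  have : Tendsto (fun n : ℕ => ((r n : ℝ) : EReal)) atTop (𝓝 ((0 : ℝ) : EReal)) :=
    (EReal.tendsto_coe).2 hrt
  simpa using this.limsup_eq


lemma Tower.value_ne_top {M N : D} (S : Tower M N) (t : ℝ) : S.value t ≠ ⊤ := by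
  unfold Tower.value
  exact (ENNReal.sum_lt_top.2 (fun i _ => ENNReal.ofReal_lt_top)).ne


noncomputable def fpowCommShift (F : D ⥤ D) [F.CommShift ℤ] :
    (n : ℕ) → (fpow F n).CommShift ℤ
  | 0 => inferInstanceAs ((𝟭 D).CommShift ℤ)
  | n + 1 =>
    letI := fpowCommShift F n
    inferInstanceAs ((fpow F n ⋙ F).CommShift ℤ)

lemma fpowIsTriangulated (F : D ⥤ D) [F.CommShift ℤ] [F.IsTriangulated] :
    ∀ n : ℕ, letI := fpowCommShift F n; (fpow F n).IsTriangulated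
  | 0 => inferInstanceAs ((𝟭 D).IsTriangulated)
  | n + 1 =>
    letI := fpowCommShift F n
    letI := fpowIsTriangulated F n
    inferInstanceAs ((fpow F n ⋙ F).IsTriangulated)

lemma eps_bounds (hfin : HomFinite D 𝕜) (hbdd : ExtBounded D) (t : ℝ)
    (T : D ⥤ D) [T.CommShift ℤ] [T.IsTriangulated] (G : D) (hG : IsSplitGenerator G)
    (A : D) (s : ℤ)
    (htri : ∀ n : ℕ, ∃ (f : (A⟦s * n⟧) ⟶ (fpow T n).obj G)
      (g : (fpow T n).obj G ⟶ (fpow T (n + 1)).obj G)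
      (h : (fpow T (n + 1)).obj G ⟶ (A⟦s * n⟧)⟦(1 : ℤ)⟧),
      Triangle.mk f g h ∈ distTriang D)
    {E : D} (hE : ¬ IsZero E) {sE : ℤ} (e : T.obj E ≅ E⟦sE⟧) :
    ∃ K' : ℝ≥0∞, K' ≠ 0 ∧ K' ≠ ⊤ ∧
      (∀ n : ℕ, K' * ENNReal.ofReal (Real.exp (((sE * n : ℤ) : ℝ) * t)) ≤
        extDist 𝕜 t G ((fpow T n).obj G)) ∧
      (∀ n : ℕ, extDist 𝕜 t G ((fpow T n).obj G) ≤
        extDist 𝕜 t G G + ENNReal.ofReal (∑ k ∈ Finset.range n,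
          Real.exp (((s * k + 1 : ℤ) : ℝ) * t)) * extDist 𝕜 t G A) := by
  obtain ⟨S⟩ := hG E
  set v : ℝ≥0∞ := S.value t with hv
  have hvtop : v ≠ ⊤ := S.value_ne_top t
  set εE : ℝ≥0∞ := extDist 𝕜 t G E with hεE
  have hεE0 : εE ≠ 0 := (extDist_pos 𝕜 hfin S hE t).ne'
  have hεEtop : εE ≠ ⊤ := (extDist_lt_top 𝕜 hfin hbdd t G E).ne
  -- the key inequality from the tower transported by `fpow T n`
  have hkey : ∀ n : ℕ, ENNReal.ofReal (Real.exp (((sE * n : ℤ) : ℝ) * t)) * εE ≤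
      v * extDist 𝕜 t G ((fpow T n).obj G) := by
    intro n
    letI := fpowCommShift T n
    letI := fpowIsTriangulated T n
    obtain ⟨i⟩ := fpow_obj_iso T e n
    have h1 : extDist 𝕜 t G (E⟦sE * (n : ℤ)⟧) = extDist 𝕜 t G ((fpow T n).obj E) :=
      (extDist_congr 𝕜 t i).symm
    have h2 := extDist_le_tower_value 𝕜 hfin t G (S.map (fpow T n))
    rw [Tower.map_value] at h2
    rw [extDist_shift] at h1
    rw [← hεE, ← hv] at *
    calc ENNReal.ofReal (Real.exp (((sE * n : ℤ) : ℝ) * t)) * εE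
        = extDist 𝕜 t G ((fpow T n).obj E) := by rw [← h1]
    _ ≤ v * extDist 𝕜 t G ((fpow T n).obj G) := h2
  have hv0 : v ≠ 0 := by
    intro hv0
    have := hkey 0
    rw [hv0, zero_mul, le_zero_iff, mul_eq_zero] at this
    rcases this with h | h
    · exact (ENNReal.ofReal_pos.2 (Real.exp_pos _)).ne' h
    · exact hεE0 h
  refine ⟨εE * v⁻¹, ?_, ?_, ?_, ?_⟩
  · exact mul_ne_zero hεE0 (ENNReal.inv_ne_zero.2 hvtop)
  · exact ENNReal.mul_ne_top hεEtop (ENNReal.inv_ne_top.2 hv0)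
  · -- lower bound
    intro n
    have h3 : (ENNReal.ofReal (Real.exp (((sE * n : ℤ) : ℝ) * t)) * εE) / v ≤
        extDist 𝕜 t G ((fpow T n).obj G) := ENNReal.div_le_of_le_mul' (hkey n)
    refine le_trans (le_of_eq ?_) h3
    rw [div_eq_mul_inv]
    ring
  · -- upper bound
    intro n
    have hrec : ∀ k : ℕ, extDist 𝕜 t G ((fpow T (k + 1)).obj G) ≤
        extDist 𝕜 t G ((fpow T k).obj G) +
          ENNReal.ofReal (Real.exp (((s * k + 1 : ℤ) : ℝ) * t)) * extDist 𝕜 t G A := by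
      intro k
      obtain ⟨f, g, h, hdist⟩ := htri k
      have hrot := rot_of_distTriang _ hdist
      have step := extDist_middle_le 𝕜 hfin t G _ hrot
      simp only [Triangle.rotate_obj₁, Triangle.rotate_obj₂, Triangle.rotate_obj₃,
        Triangle.mk_obj₁, Triangle.mk_obj₂, Triangle.mk_obj₃] at step
      rw [extDist_shift, extDist_shift] at step
      refine le_trans step (le_of_eq ?_)
      congr 1
      rw [← mul_assoc, ← ENNReal.ofReal_mul (Real.exp_pos _).le, ← Real.exp_add]
      congr 2
      push_cast
      ring
    induction n with
    | zero =>
      have : extDist 𝕜 t G ((fpow T 0).obj G) = extDist 𝕜 t G G := rfl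
      simp [this]
    | succ n IH =>
      refine le_trans (hrec n) (le_trans (add_le_add_left IH _) (le_of_eq ?_))
      rw [ENNReal.ofReal_sum_of_nonneg (fun i _ => (Real.exp_pos _).le),
        ENNReal.ofReal_sum_of_nonneg (fun i _ => (Real.exp_pos _).le),
        Finset.sum_range_succ, add_assoc, add_mul]


lemma geom_bound_pos {h : ℝ} (hh : 0 < h) (t : ℝ) (n : ℕ) :
    ∑ k ∈ Finset.range n, Real.exp ((k : ℝ) * h + t) ≤
      Real.exp t / (Real.exp h - 1) * Real.exp ((n : ℝ) * h) := by
  have hr1 : (1 : ℝ) < Real.exp h := by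
    rw [← Real.exp_zero]; exact Real.exp_lt_exp.2 hh
  have hr0 : 0 < Real.exp h - 1 := by linarith
  have hsum : ∑ k ∈ Finset.range n, Real.exp ((k : ℝ) * h + t) =
      Real.exp t * ∑ k ∈ Finset.range n, (Real.exp h) ^ k := by
    rw [Finset.mul_sum]
    refine Finset.sum_congr rfl (fun k _ => ?_)
    rw [Real.exp_add, Real.exp_nat_mul, mul_comm]
  rw [hsum, geom_sum_eq hr1.ne' n]
  calc Real.exp t * ((Real.exp h ^ n - 1) / (Real.exp h - 1))
      ≤ Real.exp t * (Real.exp h ^ n / (Real.exp h - 1)) := by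
        gcongr
        linarith
  _ = Real.exp t / (Real.exp h - 1) * Real.exp h ^ n := by ring
  _ = Real.exp t / (Real.exp h - 1) * Real.exp ((n : ℝ) * h) := by
        rw [Real.exp_nat_mul]

lemma geom_bound_neg {h : ℝ} (hh : h < 0) (t : ℝ) (n : ℕ) :
    ∑ k ∈ Finset.range n, Real.exp ((k : ℝ) * h + t) ≤
      Real.exp t * (1 - Real.exp h)⁻¹ := by
  have hr1 : Real.exp h < 1 := by
    rw [← Real.exp_zero]; exact Real.exp_lt_exp.2 hh
  have hsum : ∑ k ∈ Finset.range n, Real.exp ((k : ℝ) * h + t) =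
      Real.exp t * ∑ k ∈ Finset.range n, (Real.exp h) ^ k := by
    rw [Finset.mul_sum]
    refine Finset.sum_congr rfl (fun k _ => ?_)
    rw [Real.exp_add, Real.exp_nat_mul, mul_comm]
  rw [hsum]
  refine mul_le_mul_of_nonneg_left ?_ (Real.exp_pos t).le
  have hs := Summable.sum_le_tsum (Finset.range n) (fun i _ => pow_nonneg (Real.exp_pos h).le i)
    (summable_geometric_of_lt_one (Real.exp_pos h).le hr1)
  rwa [tsum_geometric_of_lt_one (Real.exp_pos h).le hr1] at hs

lemma polyEntropy_eq_zero_of_bounds (t : ℝ) (F : D ⥤ D) (G : D) (h : ℝ)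
    (hent : entropy t F G = ((h : ℝ) : EReal))
    (K' K : ℝ≥0∞) (hK'0 : K' ≠ 0) (hK'top : K' ≠ ⊤) (hKtop : K ≠ ⊤)
    (hlow : ∀ n : ℕ, K' * ENNReal.ofReal (Real.exp ((n : ℝ) * h)) ≤
      complexity t G ((fpow F n).obj G))
    (hup : ∀ n : ℕ, complexity t G ((fpow F n).obj G) ≤
      K * ENNReal.ofReal (Real.exp ((n : ℝ) * h))) :
    polyEntropy t F G = 0 := by
  unfold polyEntropy
  rw [hent]
  exact limsup_aux _ h K' K hK'0 hK'top hKtop hlow hup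

end Aux

/-- For `d ≥ 2` and (an abstraction of) the spherical twist `T` along a
`d`-spherical object:
(iii) if `t < 0`, `h_t(T) = (1-d)t`, and there is a nonzero `E` with `T(E) ≅ E[1-d]`,
then `h^pol_t(T) = 0`;
(iv) if `t > 0`, `h_t(T) = 0`, and there is a nonzero `E'` with `T(E') ≅ E'`,
then `h^pol_t(T) = 0`. -/
theorem statement_13 {D : Type u} [Category.{v} D] [HasZeroObject D] [Preadditive D]
    [HasShift D ℤ] [∀ n : ℤ, (CategoryTheory.shiftFunctor D n).Additive] [Pretriangulated D]
    [HasBinaryBiproducts D] (𝕜 : Type*) [Field 𝕜] [Linear 𝕜 D]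
    (hfin : HomFinite D 𝕜) (hbdd : ExtBounded D) (hcomp : Comparability D 𝕜)
    (d : ℕ) (hd : 2 ≤ d) (T : D ⥤ D) [T.CommShift ℤ] [T.IsTriangulated]
    (hT : NotVirtuallyZero T)
    (G : D) (hG : IsSplitGenerator G) (A : D)
    (htri : ∀ n : ℕ, ∃ (f : (A⟦(1 - (d : ℤ)) * n⟧) ⟶ (fpow T n).obj G)
      (g : (fpow T n).obj G ⟶ (fpow T (n + 1)).obj G)
      (h : (fpow T (n + 1)).obj G ⟶ (A⟦(1 - (d : ℤ)) * n⟧)⟦(1 : ℤ)⟧),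
      Triangle.mk f g h ∈ distTriang D) :
    (∀ t : ℝ, t < 0 → entropy t T G = (((1 - (d : ℝ)) * t : ℝ) : EReal) →
      (∃ E : D, ¬ IsZero E ∧ Nonempty (T.obj E ≅ E⟦(1 - (d : ℤ))⟧)) →
      polyEntropy t T G = 0) ∧
    (∀ t : ℝ, 0 < t → entropy t T G = 0 →
      (∃ E' : D, ¬ IsZero E' ∧ Nonempty (T.obj E' ≅ E')) →
      polyEntropy t T G = 0) := by
  obtain ⟨C₁, C₂, hCpos, hC⟩ := hcomp
  constructor
  · -- case (iii) : t < 0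
    rintro t ht hent ⟨E, hE, ⟨e⟩⟩
    obtain ⟨K', hK'0, hK'top, hlow, hup⟩ :=
      eps_bounds 𝕜 hfin hbdd t T G hG A (1 - (d : ℤ)) htri hE e
    have hεGtop : extDist 𝕜 t G G ≠ ⊤ := (extDist_lt_top 𝕜 hfin hbdd t G G).ne
    have hεAtop : extDist 𝕜 t G A ≠ ⊤ := (extDist_lt_top 𝕜 hfin hbdd t G A).ne
    set h : ℝ := (1 - (d : ℝ)) * t with hh
    have hd1 : (2 : ℝ) ≤ (d : ℝ) := by exact_mod_cast hd
    have hhpos : 0 < h := by nlinarith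
    set c : ℝ := Real.exp t / (Real.exp h - 1) with hc
    have hcpos : 0 < c := by
      have hr1 : (1 : ℝ) < Real.exp h := by
        rw [← Real.exp_zero]; exact Real.exp_lt_exp.2 hhpos
      exact div_pos (Real.exp_pos t) (by linarith)
    set Kup : ℝ≥0∞ := ENNReal.ofReal (C₂ t) * (extDist 𝕜 t G G +
      ENNReal.ofReal c * extDist 𝕜 t G A) with hKup
    refine polyEntropy_eq_zero_of_bounds t T G h hent
      (ENNReal.ofReal (C₁ t) * K') Kup ?_ ?_ ?_ ?_ ?_
    · exact mul_ne_zero (ENNReal.ofReal_pos.2 (hCpos t).1).ne' hK'0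
    · exact ENNReal.mul_ne_top ENNReal.ofReal_ne_top hK'top
    · exact ENNReal.mul_ne_top ENNReal.ofReal_ne_top
        (ENNReal.add_ne_top.2 ⟨hεGtop, ENNReal.mul_ne_top ENNReal.ofReal_ne_top hεAtop⟩)
    · -- lower bound
      intro n
      have h1 := hlow n
      have hexp : (((1 - (d : ℤ)) * (n : ℤ) : ℤ) : ℝ) * t = (n : ℝ) * h := by
        push_cast; ring
      rw [hexp] at h1
      calc ENNReal.ofReal (C₁ t) * K' * ENNReal.ofReal (Real.exp ((n : ℝ) * h))
          = ENNReal.ofReal (C₁ t) * (K' * ENNReal.ofReal (Real.exp ((n : ℝ) * h))) := by ring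
      _ ≤ ENNReal.ofReal (C₁ t) * extDist 𝕜 t G ((fpow T n).obj G) := by gcongr
      _ ≤ complexity t G ((fpow T n).obj G) := (hC t G ((fpow T n).obj G)).1
    · -- upper bound
      intro n
      have h1 := hup n
      have hsum1 : (∑ k ∈ Finset.range n, Real.exp ((((1 - (d : ℤ)) * k + 1 : ℤ)) * t))
          = ∑ k ∈ Finset.range n, Real.exp ((k : ℝ) * h + t) := by
        refine Finset.sum_congr rfl (fun k _ => ?_)
        congr 1
        push_cast
        ring
      rw [hsum1] at h1
      have hmid : extDist 𝕜 t G ((fpow T n).obj G) ≤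
          (extDist 𝕜 t G G + ENNReal.ofReal c * extDist 𝕜 t G A) *
            ENNReal.ofReal (Real.exp ((n : ℝ) * h)) := by
        refine le_trans h1 ?_
        have hsumle : ENNReal.ofReal (∑ k ∈ Finset.range n, Real.exp ((k : ℝ) * h + t)) ≤
            ENNReal.ofReal c * ENNReal.ofReal (Real.exp ((n : ℝ) * h)) := by
          rw [← ENNReal.ofReal_mul hcpos.le]
          exact ENNReal.ofReal_le_ofReal (geom_bound_pos hhpos t n)
        have h1' : (1 : ℝ≥0∞) ≤ ENNReal.ofReal (Real.exp ((n : ℝ) * h)) :=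
          ENNReal.one_le_ofReal.2
            (by rw [← Real.exp_zero]; exact Real.exp_le_exp.2 (by positivity))
        refine le_trans (add_le_add (le_mul_of_one_le_right' h1')
          (mul_le_mul_left hsumle (extDist 𝕜 t G A))) (le_of_eq (by ring))
      calc complexity t G ((fpow T n).obj G)
          ≤ ENNReal.ofReal (C₂ t) * extDist 𝕜 t G ((fpow T n).obj G) :=
            (hC t G ((fpow T n).obj G)).2
      _ ≤ ENNReal.ofReal (C₂ t) * ((extDist 𝕜 t G G + ENNReal.ofReal c * extDist 𝕜 t G A) *
            ENNReal.ofReal (Real.exp ((n : ℝ) * h))) := by gcongr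
      _ = Kup * ENNReal.ofReal (Real.exp ((n : ℝ) * h)) := by rw [hKup]; ring
  · -- case (iv) : t > 0
    rintro t ht hent ⟨E', hE', ⟨e'⟩⟩
    have e0 : T.obj E' ≅ E'⟦(0 : ℤ)⟧ := e' ≪≫ ((shiftFunctorZero D ℤ).app E').symm
    obtain ⟨K', hK'0, hK'top, hlow, hup⟩ :=
      eps_bounds 𝕜 hfin hbdd t T G hG A (1 - (d : ℤ)) htri hE' e0
    have hεGtop : extDist 𝕜 t G G ≠ ⊤ := (extDist_lt_top 𝕜 hfin hbdd t G G).ne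
    have hεAtop : extDist 𝕜 t G A ≠ ⊤ := (extDist_lt_top 𝕜 hfin hbdd t G A).ne
    set h' : ℝ := (1 - (d : ℝ)) * t with hh'
    have hd1 : (2 : ℝ) ≤ (d : ℝ) := by exact_mod_cast hd
    have hhneg : h' < 0 := by nlinarith
    set c : ℝ := Real.exp t * (1 - Real.exp h')⁻¹ with hc
    have hcpos : 0 < c := by
      have hr1 : Real.exp h' < 1 := by
        rw [← Real.exp_zero]; exact Real.exp_lt_exp.2 hhneg
      exact mul_pos (Real.exp_pos t) (inv_pos.2 (by linarith))
    set Kup : ℝ≥0∞ := ENNReal.ofReal (C₂ t) * (extDist 𝕜 t G G +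
      ENNReal.ofReal c * extDist 𝕜 t G A) with hKup
    have hent0 : entropy t T G = (((0 : ℝ) : ℝ) : EReal) := by
      rw [hent]; exact EReal.coe_zero.symm
    refine polyEntropy_eq_zero_of_bounds t T G 0 hent0
      (ENNReal.ofReal (C₁ t) * K') Kup ?_ ?_ ?_ ?_ ?_
    · exact mul_ne_zero (ENNReal.ofReal_pos.2 (hCpos t).1).ne' hK'0
    · exact ENNReal.mul_ne_top ENNReal.ofReal_ne_top hK'top
    · exact ENNReal.mul_ne_top ENNReal.ofReal_ne_top
        (ENNReal.add_ne_top.2 ⟨hεGtop, ENNReal.mul_ne_top ENNReal.ofReal_ne_top hεAtop⟩)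
    · -- lower bound
      intro n
      have h1 := hlow n
      have hexp : (((0 : ℤ) * (n : ℤ) : ℤ) : ℝ) * t = (n : ℝ) * (0 : ℝ) := by
        push_cast; ring
      rw [hexp] at h1
      calc ENNReal.ofReal (C₁ t) * K' * ENNReal.ofReal (Real.exp ((n : ℝ) * 0))
          = ENNReal.ofReal (C₁ t) * (K' * ENNReal.ofReal (Real.exp ((n : ℝ) * 0))) := by ring
      _ ≤ ENNReal.ofReal (C₁ t) * extDist 𝕜 t G ((fpow T n).obj G) := by gcongr
      _ ≤ complexity t G ((fpow T n).obj G) := (hC t G ((fpow T n).obj G)).1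
    · -- upper bound
      intro n
      have h1 := hup n
      have hsum1 : (∑ k ∈ Finset.range n, Real.exp ((((1 - (d : ℤ)) * k + 1 : ℤ)) * t))
          = ∑ k ∈ Finset.range n, Real.exp ((k : ℝ) * h' + t) := by
        refine Finset.sum_congr rfl (fun k _ => ?_)
        congr 1
        push_cast
        ring
      rw [hsum1] at h1
      have hone : ENNReal.ofReal (Real.exp ((n : ℝ) * 0)) = 1 := by
        rw [mul_zero, Real.exp_zero, ENNReal.ofReal_one]
      rw [hone, mul_one]
      calc complexity t G ((fpow T n).obj G)
          ≤ ENNReal.ofReal (C₂ t) * extDist 𝕜 t G ((fpow T n).obj G) :=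
            (hC t G ((fpow T n).obj G)).2
      _ ≤ ENNReal.ofReal (C₂ t) * (extDist 𝕜 t G G + ENNReal.ofReal c * extDist 𝕜 t G A) := by
            gcongr
            refine le_trans h1 ?_
            gcongr
            exact geom_bound_neg hhneg t n
      _ = Kup := hKup.symm

end CatDyn
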